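/- If a graph G satisfies α(G) > |V(G)|/2, then |core(G)| > |N(core(G))|. -/
import Mathlib


open Finset

variable {V : Type*} [Fintype V] [DecidableEq V]

/-  A set of vertices is stable (independent) if no two of its vertices are adjacent. -/
def stable (G : SimpleGraph V) (S : Finset V) : Prop :=
  ∀ a ∈ S, ∀ b ∈ S, ¬ G.Adj a b

/-  The (open) neighborhood of a set of vertices. -/
open Classical in
noncomputable def nbhd (G : SimpleGraph V) (A : Finset V) : Finset V :=
  Finset.univ.filter fun v => ∃ a ∈ A, G.Adj a v

/-  The stability number: maximum size of a stable set. -/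
open Classical in
noncomputable def alpha (G : SimpleGraph V) : ℕ :=
  Finset.univ.sup fun S : Finset V => if stable G S then S.card else 0

/-  A maximum stable set. -/
def maxStable (G : SimpleGraph V) (S : Finset V) : Prop :=
  stable G S ∧ S.card = alpha G

/-  core(G): the intersection of all maximum stable sets. -/
open Classical in
noncomputable def core (G : SimpleGraph V) : Finset V :=
  Finset.univ.filter fun v => ∀ S : Finset V, maxStable G S → v ∈ S

/-  A vertex is isolated if it has no neighbors. -/
def isolated (G : SimpleGraph V) (v : V) : Prop := ∀ w, ¬ G.Adj v w

/-  The set of isolated vertices. -/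
open Classical in
noncomputable def isol (G : SimpleGraph V) : Finset V :=
  Finset.univ.filter fun v => isolated G v

lemma stable_subset {G : SimpleGraph V} {S T : Finset V} (h : stable G S) (hsub : T ⊆ S) :
    stable G T := fun a ha b hb => h a (hsub ha) b (hsub hb)

lemma card_le_alpha {G : SimpleGraph V} {S : Finset V} (h : stable G S) :
    S.card ≤ alpha G := by
  classical
  have : (if stable G S then S.card else 0) ≤ alpha G :=
    Finset.le_sup (f := fun S : Finset V => if stable G S then S.card else 0)
      (Finset.mem_univ S)
  rwa [if_pos h] at this

lemma exists_maxStable (G : SimpleGraph V) : ∃ S, maxStable G S := by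
  classical
  obtain ⟨S, -, hS⟩ := Finset.exists_mem_eq_sup (univ : Finset (Finset V)) univ_nonempty
    (fun S : Finset V => if stable G S then S.card else 0)
  by_cases h : stable G S
  · exact ⟨S, h, by rw [alpha, hS, if_pos h]⟩
  · refine ⟨∅, fun a ha => absurd ha (notMem_empty a), ?_⟩
    rw [alpha, hS, if_neg h, card_empty]

lemma exchange {G : SimpleGraph V} {X S : Finset V} (hX : stable G X) (hS : maxStable G S) :
    (X \ S).card ≤ (S ∩ nbhd G X).card := by
  classical
  set T : Finset V := X ∪ (S \ nbhd G X) with hT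
  have hmemN : ∀ v, v ∈ nbhd G X ↔ ∃ a ∈ X, G.Adj a v := by
    intro v; rw [nbhd, mem_filter]; simp
  have hTstable : stable G T := by
    intro a ha b hb hadj
    rw [hT, mem_union] at ha hb
    rcases ha with ha | ha <;> rcases hb with hb | hb
    · exact hX a ha b hb hadj
    · exact (mem_sdiff.mp hb).2 ((hmemN b).mpr ⟨a, ha, hadj⟩)
    · exact (mem_sdiff.mp ha).2 ((hmemN a).mpr ⟨b, hb, hadj.symm⟩)
    · exact hS.1 a (mem_sdiff.mp ha).1 b (mem_sdiff.mp hb).1 hadj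
  have hTcard : T.card ≤ S.card := by
    rw [hS.2]; exact card_le_alpha hTstable
  have e0 : T.card + (X ∩ (S \ nbhd G X)).card = X.card + (S \ nbhd G X).card :=
    card_union_add_card_inter _ _
  have hXN : X ∩ (S \ nbhd G X) = X ∩ S := by
    ext x
    simp only [mem_inter, mem_sdiff]
    refine ⟨fun h => ⟨h.1, h.2.1⟩, fun h => ⟨h.1, h.2, fun hN => ?_⟩⟩
    obtain ⟨a, ha, hadj⟩ := (hmemN x).mp hN
    exact hX a ha x h.1 hadj
  have e1 : (S \ nbhd G X).card + (S ∩ nbhd G X).card = S.card :=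
    card_sdiff_add_card_inter _ _
  have e2 : (X ∩ S).card + (X \ S).card = X.card :=
    card_inter_add_card_sdiff _ _
  rw [hXN] at e0
  omega

open Classical in
lemma key (G : SimpleGraph V) (F : Finset (Finset V)) :
    F.Nonempty → (∀ S ∈ F, maxStable G S) →
      2 * alpha G ≤ (F.inf id).card + (F.sup id).card := by
  classical
  induction F using Finset.induction_on with
  | empty => intro h; exact absurd h (by simp)
  | @insert S F' hnotmem ih =>
    intro _ hF
    have hS : maxStable G S := hF S (mem_insert_self _ _)
    by_cases hF' : F'.Nonempty
    · have hIH := ih hF' (fun T hT => hF T (mem_insert_of_mem hT))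
      set X := F'.inf id with hXdef
      set Y := F'.sup id with hYdef
      obtain ⟨S₀, hS₀⟩ := hF'
      have hXsub : X ⊆ S₀ := Finset.le_iff_subset.mp (Finset.inf_le hS₀)
      have hXstable : stable G X :=
        stable_subset (hF S₀ (mem_insert_of_mem hS₀)).1 hXsub
      have hexch := exchange hXstable hS
      have hsub : S ∩ nbhd G X ⊆ S \ Y := by
        intro v hv
        obtain ⟨hvS, hvN⟩ := mem_inter.mp hv
        rw [nbhd, mem_filter] at hvN
        obtain ⟨-, a, ha, hadj⟩ := hvN
        rw [mem_sdiff]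
        refine ⟨hvS, fun hvY => ?_⟩
        obtain ⟨T, hT, hvT⟩ := Finset.mem_sup.mp hvY
        have haT : a ∈ T := Finset.le_iff_subset.mp (Finset.inf_le hT) ha
        exact (hF T (mem_insert_of_mem hT)).1 a haT v hvT hadj
      have h1 : (X \ S).card ≤ (S \ Y).card :=
        le_trans hexch (card_le_card hsub)
      have e1 : (S ∩ X).card + (X \ S).card = X.card := by
        rw [inter_comm]; exact card_inter_add_card_sdiff _ _
      have e2 : (S ∩ Y).card + (S \ Y).card = S.card :=
        card_inter_add_card_sdiff _ _
      have e3 : (S ∪ Y).card + (S ∩ Y).card = S.card + Y.card :=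
        card_union_add_card_inter _ _
      have hScard : S.card = alpha G := hS.2
      rw [Finset.inf_insert, Finset.sup_insert]
      have hinf : (id S ⊓ X : Finset V) = S ∩ X := rfl
      have hsup : (id S ⊔ Y : Finset V) = S ∪ Y := rfl
      rw [hinf, hsup]
      omega
    · rw [Finset.not_nonempty_iff_eq_empty] at hF'
      subst hF'
      simp only [Finset.inf_insert, Finset.sup_insert, Finset.inf_empty,
        Finset.sup_empty, id]
      have h1 : (S ⊓ (⊤ : Finset V)) = S := by simp
      have h2 : (S ⊔ (⊥ : Finset V)) = S := by simp
      rw [h1, h2, hS.2]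
      omega

open Classical in
lemma core_eq (G : SimpleGraph V) :
    core G = ((univ : Finset (Finset V)).filter (maxStable G)).inf id := by
  classical
  apply le_antisymm
  · apply Finset.le_inf
    intro S hS v hv
    rw [core, mem_filter] at hv
    exact hv.2 S (mem_filter.mp hS).2
  · intro v hv
    rw [core, mem_filter]
    refine ⟨mem_univ v, fun S hS => ?_⟩
    exact Finset.le_iff_subset.mp (Finset.inf_le (mem_filter.mpr ⟨mem_univ S, hS⟩)) hv

/-  If α(G) > |V(G)|/2, then |core(G)| > |N(core(G))|. -/
theorem stmt15 (G : SimpleGraph V) (h : Fintype.card V < 2 * alpha G) :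
    (nbhd G (core G)).card < (core G).card := by
  classical
  set F := (univ : Finset (Finset V)).filter (maxStable G) with hFdef
  have hne : F.Nonempty := by
    obtain ⟨S, hS⟩ := exists_maxStable G
    exact ⟨S, mem_filter.mpr ⟨mem_univ S, hS⟩⟩
  have hkey := key G F hne (fun S hS => (mem_filter.mp hS).2)
  rw [← core_eq] at hkey
  have hdisj : Disjoint (nbhd G (core G)) (F.sup id) := by
    rw [Finset.disjoint_left]
    intro v hv hvU
    rw [nbhd, mem_filter] at hv
    obtain ⟨-, a, ha, hadj⟩ := hv
    obtain ⟨T, hT, hvT⟩ := Finset.mem_sup.mp hvU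
    have hTmax := (mem_filter.mp hT).2
    have haT : a ∈ T := by
      rw [core, mem_filter] at ha
      exact ha.2 T hTmax
    exact hTmax.1 a haT v hvT hadj
  have hcard : (nbhd G (core G)).card + (F.sup id).card ≤ Fintype.card V := by
    rw [← Finset.card_union_of_disjoint hdisj]
    simpa using Finset.card_le_univ _
  omega
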